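/- Let n ≥ 3 be an integer and λ > 0. With f, G as defined below, G is a strictly decreasing C¹ bijection from (0,1) onto (0,∞) with nonvanishing derivative; let G⁻¹ denote its inverse. For u ∈ C¹((0,1)) define u_λ(r) = λ^{−1/2} u(G⁻¹(λ G(r))), which is again C¹ on (0,1). Then the Lebesgue integrals (with values in [0,∞]) satisfy ∫₀¹ ((1−r²)²/4) |u_λ′(r)|² (2/(1−r²))ⁿ r^{n−1} dr = ∫₀¹ ((1−r²)²/4) |u′(r)|² (2/(1−r²))ⁿ r^{n−1} dr. (This is the invariance of the hyperbolic Dirichlet energy ∫_{𝔹ⁿ} |∇_{𝔹ⁿ}u_λ|² dv_{g_{𝔹ⁿ}} = ∫_{𝔹ⁿ} |∇_{𝔹ⁿ}u|² dv_{g_{𝔹ⁿ}} for radial functions, written in polar coordinates up to the constant factor n·ω_{n−1}.) -/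

import Mathlib

open Real Filter Set MeasureTheory

/-- `f n r = (1 - r²)^(n-2) / r^(n-1)`. -/
noncomputable def f (n : ℕ) (r : ℝ) : ℝ := (1 - r ^ 2) ^ (n - 2) / r ^ (n - 1)

/-- `G n r = ∫_r^1 f n t dt`. -/
noncomputable def G (n : ℕ) (r : ℝ) : ℝ := ∫ t in r..(1 : ℝ), f n t

lemma f_pos {n : ℕ} {r : ℝ} (hr : r ∈ Set.Ioo (0:ℝ) 1) : 0 < f n r := by
  have h1 : 0 < 1 - r ^ 2 := by nlinarith [hr.1, hr.2]
  exact div_pos (pow_pos h1 _) (pow_pos hr.1 _)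

lemma f_contAt {n : ℕ} {r : ℝ} (hr : r ≠ 0) : ContinuousAt (f n) r := by
  have : ContinuousAt (fun t : ℝ => (1 - t ^ 2) ^ (n - 2) / t ^ (n - 1)) r :=
    ContinuousAt.div (by fun_prop) (by fun_prop) (pow_ne_zero _ hr)
  exact this

lemma f_contOn {n : ℕ} : ContinuousOn (f n) (Set.Ioi 0) :=
  fun x hx => (f_contAt (ne_of_gt hx)).continuousWithinAt

lemma f_intble {n : ℕ} {a b : ℝ} (ha : 0 < a) (hb : 0 < b) :
    IntervalIntegrable (f n) volume a b := by
  apply ContinuousOn.intervalIntegrable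
  apply f_contOn.mono
  intro x hx
  exact lt_of_lt_of_le (lt_min ha hb) hx.1

lemma G_hasStrictDerivAt {n : ℕ} {r : ℝ} (hr : 0 < r) :
    HasStrictDerivAt (G n) (-(f n r)) r := by
  have h1 : HasStrictDerivAt (fun x => ∫ t in (1:ℝ)..x, f n t) (f n r) r :=
    intervalIntegral.integral_hasStrictDerivAt_right (f_intble one_pos hr)
      (f_contOn.stronglyMeasurableAtFilter isOpen_Ioi r hr) (f_contAt hr.ne')
  have h2 : (G n) = fun x => -∫ t in (1:ℝ)..x, f n t := by
    funext x; rw [G, intervalIntegral.integral_symm]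
  rw [h2]
  exact h1.neg

lemma G_sub {n : ℕ} {a b : ℝ} (ha : 0 < a) (hb : 0 < b) :
    G n a - G n b = ∫ t in a..b, f n t := by
  have := intervalIntegral.integral_add_adjacent_intervals (a := a) (b := b) (c := 1)
    (f_intble (n := n) ha hb) (f_intble (n := n) hb one_pos)
  rw [G, G]
  linarith [this]

lemma G_strictAnti {n : ℕ} : StrictAntiOn (G n) (Set.Ioo 0 1) := by
  intro a ha b hb hab
  have key := G_sub (n := n) ha.1 hb.1
  have hpos : 0 < ∫ t in a..b, f n t :=
    intervalIntegral.intervalIntegral_pos_of_pos_on (f_intble ha.1 hb.1)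
      (fun x hx => f_pos ⟨lt_trans ha.1 hx.1, lt_trans hx.2 hb.2⟩) hab
  linarith

lemma G_pos {n : ℕ} {r : ℝ} (hr : r ∈ Set.Ioo (0:ℝ) 1) : 0 < G n r := by
  rw [G]
  exact intervalIntegral.intervalIntegral_pos_of_pos_on (f_intble hr.1 one_pos)
    (fun x hx => f_pos ⟨lt_trans hr.1 hx.1, hx.2⟩) hr.2

lemma G_one {n : ℕ} : G n 1 = 0 := by
  rw [G, intervalIntegral.integral_same]

lemma G_lower {n : ℕ} (hn : 3 ≤ n) {r : ℝ} (hr : 0 < r) (hr2 : r ≤ 1/2) :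
    (3/4 : ℝ)^(n-2) * (1/r - 2) ≤ G n r := by
  have hhalf : (0:ℝ) < 1/2 := by norm_num
  have h1 : G n r = (∫ t in r..(1/2:ℝ), f n t) + ∫ t in (1/2:ℝ)..1, f n t := by
    have hs := G_sub (n := n) hr hhalf
    have : G n (1/2) = ∫ t in (1/2:ℝ)..1, f n t := rfl
    linarith
  have h2 : 0 ≤ ∫ t in (1/2:ℝ)..1, f n t := by
    apply intervalIntegral.integral_nonneg (by norm_num)
    intro x hx
    have hx0 : (0:ℝ) < x := lt_of_lt_of_le hhalf hx.1
    have hx1 : x ≤ 1 := hx.2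
    exact div_nonneg (pow_nonneg (by nlinarith) _) (pow_pos hx0 _).le
  have hglow : ContinuousOn (fun t : ℝ => (3/4:ℝ)^(n-2) * (t^(-2:ℤ))) (Set.uIcc r (1/2)) := by
    apply ContinuousOn.mul continuousOn_const
    apply ContinuousOn.zpow₀ continuousOn_id
    intro x hx
    left
    have : r ⊓ (1/2:ℝ) ≤ x := hx.1
    have : 0 < x := lt_of_lt_of_le (lt_min hr hhalf) this
    exact ne_of_gt this
  have h3 : (∫ t in r..(1/2:ℝ), (3/4:ℝ)^(n-2) * (t^(-2:ℤ))) ≤ ∫ t in r..(1/2:ℝ), f n t := by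
    apply intervalIntegral.integral_mono_on hr2 (hglow.intervalIntegrable) (f_intble hr hhalf)
    intro x hx
    have hx0 : 0 < x := lt_of_lt_of_le hr hx.1
    have hx1 : x ≤ 1/2 := hx.2
    have hnum : (3/4:ℝ)^(n-2) ≤ (1 - x^2)^(n-2) := by
      apply pow_le_pow_left₀ (by norm_num)
      nlinarith
    have hden : x^(n-1) ≤ x^2 := by
      apply pow_le_pow_of_le_one hx0.le (by linarith) (by omega)
    have : (3/4:ℝ)^(n-2) / x^2 ≤ (1 - x^2)^(n-2) / x^(n-1) := by
      apply div_le_div₀ (pow_nonneg (by nlinarith) _) hnum (pow_pos hx0 _) hden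
    calc (3/4:ℝ)^(n-2) * (x^(-2:ℤ)) = (3/4:ℝ)^(n-2) / x^2 := by
            rw [zpow_neg, show ((2:ℤ)) = ((2:ℕ):ℤ) from rfl, zpow_natCast]; ring
      _ ≤ (1 - x^2)^(n-2) / x^(n-1) := this
      _ = f n x := rfl
  have h4 : (∫ t in r..(1/2:ℝ), (3/4:ℝ)^(n-2) * (t^(-2:ℤ)))
      = (3/4:ℝ)^(n-2) * (1/r - 2) := by
    rw [intervalIntegral.integral_const_mul]
    rw [integral_zpow]
    · norm_num [zpow_neg]
      ring
    · right
      constructor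
      · norm_num
      · intro h0
        have : r ⊓ (1/2:ℝ) ≤ 0 := h0.1
        have := lt_min hr hhalf
        linarith
  linarith

lemma G_surjOn {n : ℕ} (hn : 3 ≤ n) : Set.SurjOn (G n) (Set.Ioo 0 1) (Set.Ioi 0) := by
  intro y hy
  have hy0 : (0:ℝ) < y := hy
  set r : ℝ := 1 / (2 + y * (4/3)^(n-2)) with hrdef
  have hden : (0:ℝ) < 2 + y * (4/3)^(n-2) := by positivity
  have hr0 : 0 < r := by positivity
  have hr2 : r ≤ 1/2 := by
    rw [hrdef]
    rw [div_le_div_iff₀ hden (by norm_num)]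
    nlinarith [pow_pos (show (0:ℝ) < 4/3 by norm_num) (n-2)]
  have hGr : y ≤ G n r := by
    have := G_lower hn hr0 hr2
    have h1r : 1/r = 2 + y * (4/3)^(n-2) := by
      rw [hrdef]; field_simp
    have hpow : (3/4:ℝ)^(n-2) * (4/3)^(n-2) = 1 := by
      rw [← mul_pow]; norm_num
    have : (3/4:ℝ)^(n-2) * (1/r - 2) = y := by
      rw [h1r]
      ring_nf
      nlinarith [hpow]
    linarith [G_lower hn hr0 hr2]
  have hr1 : r < 1 := lt_of_le_of_lt hr2 (by norm_num)
  have hcont : ContinuousOn (G n) (Set.Icc r 1) := by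
    intro x hx
    have hx0 : 0 < x := lt_of_lt_of_le hr0 hx.1
    exact ((G_hasStrictDerivAt hx0).hasDerivAt.continuousAt).continuousWithinAt
  have hiv := intermediate_value_Icc' (le_of_lt hr1) hcont
  have hyin : y ∈ Set.Icc (G n 1) (G n r) := by
    rw [G_one]; exact ⟨hy0.le, hGr⟩
  obtain ⟨c, hc, hGc⟩ := hiv hyin
  refine ⟨c, ⟨lt_of_lt_of_le hr0 hc.1, ?_⟩, hGc⟩
  rcases lt_or_eq_of_le hc.2 with h | h
  · exact h
  · exfalso; rw [h, G_one] at hGc; linarith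

lemma weight_eq {n : ℕ} (hn : 3 ≤ n) {r : ℝ} (hr : r ∈ Set.Ioo (0:ℝ) 1) :
    (1 - r^2)^2/4 * (2/(1-r^2))^n * r^(n-1) = 2^(n-2) / f n r := by
  obtain ⟨m, rfl⟩ : ∃ m, n = m + 3 := ⟨n - 3, by omega⟩
  have h1 : (1:ℝ) - r^2 ≠ 0 := by nlinarith [hr.1, hr.2]
  have h2 : r ≠ 0 := ne_of_gt hr.1
  have e1 : m + 3 - 2 = m + 1 := by omega
  have e2 : m + 3 - 1 = m + 2 := by omega
  rw [f, e1, e2, div_pow]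
  field_simp
  ring

lemma G_contDiffOn {n : ℕ} : ContDiffOn ℝ 1 (G n) (Set.Ioo 0 1) := by
  rw [show (1 : WithTop ℕ∞) = 0 + 1 by norm_num,
    contDiffOn_succ_iff_deriv_of_isOpen isOpen_Ioo]
  refine ⟨fun x hx =>
    ((G_hasStrictDerivAt hx.1).hasDerivAt.differentiableAt).differentiableWithinAt,
    by simp, ?_⟩
  rw [contDiffOn_zero]
  exact ((f_contOn.mono (fun x hx => hx.1)).neg).congr
    (fun x hx => (G_hasStrictDerivAt hx.1).hasDerivAt.deriv)

/-- `G` is a strictly decreasing `C¹` bijection from `(0,1)` onto `(0,∞)` with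
nonvanishing derivative; for any inverse `G⁻¹`, any `λ > 0` and any `u ∈ C¹((0,1))`, the
rescaling `u_λ(r) = λ^{-1/2} u(G⁻¹(λ G(r)))` is again `C¹` on `(0,1)` and satisfies the
invariance of the hyperbolic Dirichlet energy
`∫₀¹ ((1-r²)²/4)|u_λ'|² (2/(1-r²))ⁿ r^{n-1} dr = ∫₀¹ ((1-r²)²/4)|u'|² (2/(1-r²))ⁿ r^{n-1} dr`. -/
theorem stmt_5 (n : ℕ) (hn : 3 ≤ n) (lam : ℝ) (hlam : 0 < lam) :
    ContDiffOn ℝ 1 (G n) (Set.Ioo 0 1) ∧ StrictAntiOn (G n) (Set.Ioo 0 1) ∧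
    Set.BijOn (G n) (Set.Ioo 0 1) (Set.Ioi 0) ∧
    (∀ r ∈ Set.Ioo (0 : ℝ) 1, deriv (G n) r ≠ 0) ∧
    ∀ Ginv : ℝ → ℝ, Set.InvOn Ginv (G n) (Set.Ioo 0 1) (Set.Ioi 0) →
      ∀ u : ℝ → ℝ, ContDiffOn ℝ 1 u (Set.Ioo 0 1) →
        ContDiffOn ℝ 1 (fun r => lam ^ (-(1 : ℝ) / 2) * u (Ginv (lam * G n r)))
          (Set.Ioo 0 1) ∧
        ∫⁻ r in Set.Ioo (0 : ℝ) 1,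
            ENNReal.ofReal ((1 - r ^ 2) ^ 2 / 4 *
              |deriv (fun t => lam ^ (-(1 : ℝ) / 2) * u (Ginv (lam * G n t))) r| ^ 2 *
              (2 / (1 - r ^ 2)) ^ n * r ^ (n - 1)) =
        ∫⁻ r in Set.Ioo (0 : ℝ) 1,
            ENNReal.ofReal ((1 - r ^ 2) ^ 2 / 4 * |deriv u r| ^ 2 *
              (2 / (1 - r ^ 2)) ^ n * r ^ (n - 1)) := by
  have hIoo : (Set.Ioo (0:ℝ) 1) ⊆ Set.Ioi 0 := fun x hx => hx.1
  refine ⟨G_contDiffOn, G_strictAnti,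
    ⟨fun r hr => G_pos hr, G_strictAnti.injOn, G_surjOn hn⟩, ?_, ?_⟩
  · intro r hr
    rw [(G_hasStrictDerivAt hr.1).hasDerivAt.deriv]
    exact neg_ne_zero.mpr (ne_of_gt (f_pos hr))
  intro Ginv hGinv u hu
  set c : ℝ := lam ^ (-(1:ℝ)/2) with hc
  have hGinv_mem : ∀ y ∈ Set.Ioi (0:ℝ), Ginv y ∈ Set.Ioo (0:ℝ) 1 ∧ G n (Ginv y) = y := by
    intro y hy
    obtain ⟨x, hx, hGx⟩ := G_surjOn hn hy
    have hxy : Ginv y = x := by rw [← hGx, hGinv.1 hx]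
    rw [hxy, hGx]
    exact ⟨hx, rfl⟩
  set φ : ℝ → ℝ := fun r => Ginv (lam * G n r) with hφdef
  set D : ℝ → ℝ := fun r => lam * f n r / f n (φ r) with hDdef
  have hφmem : ∀ r ∈ Set.Ioo (0:ℝ) 1, φ r ∈ Set.Ioo (0:ℝ) 1 ∧ G n (φ r) = lam * G n r :=
    fun r hr => hGinv_mem _ (mul_pos hlam (G_pos hr))
  have hφdiff : ∀ r ∈ Set.Ioo (0:ℝ) 1, HasDerivAt φ (D r) r := by
    intro r hr
    obtain ⟨hs, hGs⟩ := hφmem r hr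
    have hfs : 0 < f n (φ r) := f_pos hs
    have hne : -(f n (φ r)) ≠ 0 := neg_ne_zero.mpr hfs.ne'
    have hGinvD : HasStrictDerivAt Ginv (-(f n (φ r)))⁻¹ (G n (φ r)) := by
      apply (G_hasStrictDerivAt hs.1).to_local_left_inverse hne
      filter_upwards [isOpen_Ioo.mem_nhds hs] with x hx
      exact hGinv.1 hx
    rw [hGs] at hGinvD
    have h2 : HasDerivAt (fun t => lam * G n t) (lam * -(f n r)) r :=
      ((G_hasStrictDerivAt hr.1).hasDerivAt).const_mul lam
    have h3 : HasDerivAt φ ((-(f n (φ r)))⁻¹ * (lam * -(f n r))) r :=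
      HasDerivAt.comp r hGinvD.hasDerivAt h2
    convert h3 using 1
    rw [hDdef]
    field_simp
  have hφmaps : Set.MapsTo φ (Set.Ioo 0 1) (Set.Ioo 0 1) := fun r hr => (hφmem r hr).1
  have hφcont : ContinuousOn φ (Set.Ioo 0 1) :=
    fun r hr => ((hφdiff r hr).continuousAt).continuousWithinAt
  have hDcont : ContinuousOn D (Set.Ioo 0 1) := by
    apply ContinuousOn.div
    · exact continuousOn_const.mul (f_contOn.mono hIoo)
    · exact (f_contOn.mono hIoo).comp hφcont hφmaps
    · intro x hx
      exact (f_pos (hφmaps hx)).ne'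
  have hφCD : ContDiffOn ℝ 1 φ (Set.Ioo 0 1) := by
    rw [show (1 : WithTop ℕ∞) = 0 + 1 by norm_num,
      contDiffOn_succ_iff_deriv_of_isOpen isOpen_Ioo]
    refine ⟨fun x hx => ((hφdiff x hx).differentiableAt).differentiableWithinAt, by simp, ?_⟩
    rw [contDiffOn_zero]
    exact hDcont.congr (fun x hx => (hφdiff x hx).deriv)
  have huLam : ContDiffOn ℝ 1 (fun r => c * u (Ginv (lam * G n r))) (Set.Ioo 0 1) :=
    contDiffOn_const.mul (hu.comp hφCD hφmaps)
  have hderiv : ∀ r ∈ Set.Ioo (0:ℝ) 1,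
      deriv (fun t => c * u (Ginv (lam * G n t))) r = c * (deriv u (φ r) * D r) := by
    intro r hr
    have hφr := hφmaps hr
    have hud : DifferentiableAt ℝ u (φ r) :=
      (hu.differentiableOn one_ne_zero).differentiableAt (isOpen_Ioo.mem_nhds hφr)
    have h1 : HasDerivAt (fun t => u (φ t)) (deriv u (φ r) * D r) r :=
      HasDerivAt.comp r hud.hasDerivAt (hφdiff r hr)
    exact (h1.const_mul c).deriv
  have hφinj : Set.InjOn φ (Set.Ioo 0 1) := by
    intro a ha b hb hab
    have h1 := (hφmem a ha).2
    have h2 := (hφmem b hb).2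
    have h3 : lam * G n a = lam * G n b := by rw [← h1, ← h2, hab]
    exact G_strictAnti.injOn ha hb (mul_left_cancel₀ hlam.ne' h3)
  have hφim : φ '' (Set.Ioo 0 1) = Set.Ioo 0 1 := by
    apply Set.Subset.antisymm (hφmaps.image_subset)
    intro s hs
    have h1 : lam⁻¹ * G n s ∈ Set.Ioi (0:ℝ) := mul_pos (inv_pos.mpr hlam) (G_pos hs)
    obtain ⟨hr, hGr⟩ := hGinv_mem _ h1
    refine ⟨Ginv (lam⁻¹ * G n s), hr, ?_⟩
    show Ginv (lam * G n (Ginv (lam⁻¹ * G n s))) = s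
    rw [hGr, show lam * (lam⁻¹ * G n s) = G n s by field_simp]
    exact hGinv.1 hs
  have hcsq : c^2 = lam⁻¹ := by
    rw [hc, ← Real.rpow_natCast (lam ^ (-(1:ℝ)/2)) 2, ← Real.rpow_mul hlam.le]
    norm_num
    rw [Real.rpow_neg_one]
  refine ⟨huLam, ?_⟩
  have hCOV : (∫⁻ s in φ '' (Set.Ioo (0:ℝ) 1),
        ENNReal.ofReal ((1 - s ^ 2) ^ 2 / 4 * |deriv u s| ^ 2 *
          (2 / (1 - s ^ 2)) ^ n * s ^ (n - 1)))
      = ∫⁻ r in Set.Ioo (0:ℝ) 1, ENNReal.ofReal |D r| *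
          ENNReal.ofReal ((1 - (φ r) ^ 2) ^ 2 / 4 * |deriv u (φ r)| ^ 2 *
            (2 / (1 - (φ r) ^ 2)) ^ n * (φ r) ^ (n - 1)) := by
    simpa only [ContinuousLinearMap.det_toSpanSingleton] using
      lintegral_image_eq_lintegral_abs_det_fderiv_mul volume measurableSet_Ioo
        (fun x hx => ((hφdiff x hx).hasDerivWithinAt).hasFDerivWithinAt) hφinj
        (fun s => ENNReal.ofReal ((1 - s ^ 2) ^ 2 / 4 * |deriv u s| ^ 2 *
          (2 / (1 - s ^ 2)) ^ n * s ^ (n - 1)))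
  rw [hφim] at hCOV
  rw [hCOV]
  apply setLIntegral_congr_fun measurableSet_Ioo
  simp only [Set.EqOn]
  intro r hr
  have hφr := hφmaps hr
  have hfr : 0 < f n r := f_pos hr
  have hfs : 0 < f n (φ r) := f_pos hφr
  have hDpos : 0 < D r := div_pos (mul_pos hlam hfr) hfs
  rw [hderiv r hr, ← ENNReal.ofReal_mul (abs_nonneg _)]
  congr 1
  rw [abs_of_pos hDpos]
  simp only [sq_abs]
  have expand : (c * (deriv u (φ r) * D r))^2 = lam⁻¹ * (deriv u (φ r))^2 * (D r)^2 := by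
    rw [← hcsq]; ring
  have hDval : D r = lam * f n r / f n (φ r) := rfl
  calc (1 - r^2)^2/4 * (c * (deriv u (φ r) * D r))^2 * (2/(1-r^2))^n * r^(n-1)
      = ((1 - r^2)^2/4 * (2/(1-r^2))^n * r^(n-1)) * (c * (deriv u (φ r) * D r))^2 := by
        ring
    _ = ((2:ℝ)^(n-2)/f n r) * (lam⁻¹ * (deriv u (φ r))^2 * (D r)^2) := by
        rw [weight_eq hn hr, expand]
    _ = D r * (((2:ℝ)^(n-2)/f n (φ r)) * (deriv u (φ r))^2) := by
        rw [hDval]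
        field_simp
    _ = D r * ((1 - (φ r)^2)^2/4 * (2/(1-(φ r)^2))^n * (φ r)^(n-1) * (deriv u (φ r))^2) := by
        rw [weight_eq hn hφr]
    _ = D r * ((1 - (φ r)^2)^2/4 * (deriv u (φ r))^2 * (2/(1-(φ r)^2))^n * (φ r)^(n-1)) := by
        ring
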